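/- Define a_k = x_{k,0}x_{k+1,1} - x_{k,1}x_{k+1,0}, b_k = -(x_{k,0}x_{k+1,2} - x_{k,2}x_{k+1,0}), c_k = x_{k,1}x_{k+1,2} - x_{k,2}x_{k+1,1}, where the x_k arise from the recurrence x_{k+1} = x_k S_k x_{k-1} with M = [[a,1],[-1,0]] as above. Then a_k = ε_k·(-1)^{k+1}·x_{k-1,0}, b_k = ε_k·(a·x_{k-1,0} + 2·(-1)^k·x_{k-1,1}), and c_k = ε_k·(-a·x_{k-1,1} - (-1)^k·x_{k-1,2}). -/
import Mathlib

/-- The matrix `S_k = A + (-1)^k J` with `A = [[a,0],[0,0]]`, `J = [[0,1],[-1,0]]`. -/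
def Smat (a : ℤ) (k : ℕ) : Matrix (Fin 2) (Fin 2) ℤ :=
  !![a, 0; 0, 0] + ((-1 : ℤ) ^ k) • !![0, 1; -1, 0]

open Matrix in
theorem stmt_13 (a : ℤ) (ha : 0 < a)
    (x : ℕ → Matrix (Fin 2) (Fin 2) ℤ)
    (hsym : ∀ k, (x k)ᵀ = x k)
    (hunit : ∀ k, IsUnit (x k).det)
    (hrec : ∀ k, x (k + 2) = x (k + 1) * Smat a (k + 1) * x k) :
    ∀ k,
      x (k + 1) 0 0 * x (k + 2) 0 1 - x (k + 1) 0 1 * x (k + 2) 0 0 =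
          (x (k + 1)).det * (-1 : ℤ) ^ k * x k 0 0 ∧
      -(x (k + 1) 0 0 * x (k + 2) 1 1 - x (k + 1) 1 1 * x (k + 2) 0 0) =
          (x (k + 1)).det * (a * x k 0 0 + 2 * (-1 : ℤ) ^ (k + 1) * x k 0 1) ∧
      x (k + 1) 0 1 * x (k + 2) 1 1 - x (k + 1) 1 1 * x (k + 2) 0 1 =
          (x (k + 1)).det * (-(a * x k 0 1) - (-1 : ℤ) ^ (k + 1) * x k 1 1) := by
  intro k
  have hp : x (k + 1) 1 0 = x (k + 1) 0 1 := by
    have := congrFun (congrFun (hsym (k + 1)) 0) 1; simpa using this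
  have hq : x k 1 0 = x k 0 1 := by
    have := congrFun (congrFun (hsym k) 0) 1; simpa using this
  have hR : x (k + 2) 1 0 = x (k + 2) 0 1 := by
    have := congrFun (congrFun (hsym (k + 2)) 0) 1; simpa using this
  rw [hrec k] at hR ⊢
  simp [Smat, Matrix.mul_apply, Fin.sum_univ_two, Matrix.det_fin_two, hp, hq, pow_succ,
    mul_comm, mul_left_comm, mul_assoc] at hR ⊢
  refine ⟨?_, ?_, ?_⟩
  · linear_combination (-(x (k+1) 0 0)) * hR
  · linear_combination (x (k+1) 0 1) * hR
  · ring
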